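/- (Averaging periodic functions over convex bodies.) Let $m \ge 1$ be an integer and $f : \mathbb{Z}^D \to \mathbb{R}_{\ge 0}$ a function periodic with period $m$ in each coordinate. Let $\Omega \subset \mathbb{R}^D$ be a convex body with inradius $r(\Omega) \ge C_D m$ for a sufficiently large constant $C_D$ depending only on $D$. Then $\mathbb{E}_{x \in \Omega \cap \mathbb{Z}^D} f(x) = \big(1 + O_D(\tfrac{m}{r(\Omega)})\big) \, \mathbb{E}_{y \in (\mathbb{Z}/m\mathbb{Z})^D} f(y)$. -/

import Mathlib

open MeasureTheory Metric Set Pointwise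

variable {D : ℕ}


noncomputable def zc (D : ℕ) (x : Fin D → ℤ) : EuclideanSpace ℝ (Fin D) := WithLp.toLp 2 (fun i => (x i : ℝ))

def cube (D : ℕ) (x : Fin D → ℤ) : Set (EuclideanSpace ℝ (Fin D)) :=
  {y | ∀ i, y i ∈ Set.Ico ((x i : ℝ)) (x i + 1)}

lemma cube_eq (x : Fin D → ℤ) : cube D x
    = (MeasurableEquiv.toLp 2 (Fin D → ℝ)).symm ⁻¹' (Set.univ.pi fun i => Set.Ico ((x i:ℝ)) (x i + 1)) := by
  ext y; simp [cube, Set.mem_pi]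

lemma cube_vol (x : Fin D → ℤ) : volume (cube D x) = 1 := by
  rw [cube_eq, (EuclideanSpace.volume_preserving_symm_measurableEquiv_toLp (Fin D)).measure_preimage
    (MeasurableSet.univ_pi fun i => measurableSet_Ico).nullMeasurableSet]
  rw [volume_pi_pi]; simp

lemma cube_meas (x : Fin D → ℤ) : MeasurableSet (cube D x) := by
  rw [cube_eq]
  exact (MeasurableEquiv.toLp 2 (Fin D → ℝ)).symm.measurable
    (MeasurableSet.univ_pi fun i => measurableSet_Ico)

lemma cube_disjoint {x x' : Fin D → ℤ} (h : x ≠ x') : Disjoint (cube D x) (cube D x') := by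
  rw [Set.disjoint_left]
  intro y hy hy'
  apply h
  funext i
  have h1 := hy i; have h2 := hy' i
  have e1 : x i = ⌊y i⌋ := by
    symm; apply Int.floor_eq_iff.mpr
    refine ⟨h1.1, ?_⟩
    exact_mod_cast h1.2
  have e2 : x' i = ⌊y i⌋ := by
    symm; apply Int.floor_eq_iff.mpr
    refine ⟨h2.1, ?_⟩
    exact_mod_cast h2.2
  rw [e1, e2]

lemma norm_le_sqrt (w : EuclideanSpace ℝ (Fin D)) (h : ∀ i, |w i| ≤ 1) : ‖w‖ ≤ Real.sqrt D := by
  rw [EuclideanSpace.norm_eq]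
  apply Real.sqrt_le_sqrt
  calc ∑ i, ‖w i‖^2 ≤ ∑ _i : Fin D, 1 := by
        apply Finset.sum_le_sum; intro i _
        have := h i
        rw [Real.norm_eq_abs]
        nlinarith [abs_nonneg (w i)]
    _ = D := by simp

lemma coord_le_norm (w : EuclideanSpace ℝ (Fin D)) (i : Fin D) : |w i| ≤ ‖w‖ := by
  rw [EuclideanSpace.norm_eq]
  have : |w i| = Real.sqrt (‖w i‖^2) := by
    rw [Real.norm_eq_abs, Real.sqrt_sq_eq_abs, abs_abs]
  rw [this]
  apply Real.sqrt_le_sqrt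
  exact Finset.single_le_sum (f := fun j => ‖w j‖^2) (fun j _ => sq_nonneg _) (Finset.mem_univ i)

lemma lat_finite (K : Set (EuclideanSpace ℝ (Fin D))) (hb : Bornology.IsBounded K) :
    {x : Fin D → ℤ | zc D x ∈ K}.Finite := by
  obtain ⟨R, hR⟩ := hb.subset_closedBall 0
  have hsub : {x : Fin D → ℤ | zc D x ∈ K} ⊆ Set.univ.pi fun _ : Fin D => Set.Icc (-⌈R⌉) ⌈R⌉ := by
    intro x hx
    have hn : ‖zc D x‖ ≤ R := by simpa using mem_closedBall_zero_iff.mp (hR hx)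
    intro i _
    have h1 : |(x i : ℝ)| ≤ R := le_trans (by simpa [zc] using coord_le_norm (zc D x) i) hn
    have h2 : (|x i| : ℝ) ≤ (⌈R⌉ : ℝ) := le_trans (by push_cast; exact h1) (Int.le_ceil R)
    have h3 : |x i| ≤ ⌈R⌉ := by exact_mod_cast h2
    rw [abs_le] at h3
    exact ⟨h3.1, h3.2⟩
  exact Set.Finite.subset (Set.Finite.pi fun _ => Set.finite_Icc _ _) hsub

lemma mem_cube_norm_le {y : EuclideanSpace ℝ (Fin D)} {x : Fin D → ℤ} (hy : y ∈ cube D x) :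
    ‖zc D x - y‖ ≤ Real.sqrt D ∧ ‖y - zc D x‖ ≤ Real.sqrt D := by
  have h : ∀ i, |(zc D x - y) i| ≤ 1 := by
    intro i
    have h1 := hy i
    have : (zc D x - y) i = (x i : ℝ) - y i := by simp [zc]
    rw [this, abs_le]
    constructor <;> [linarith [h1.2]; linarith [h1.1]]
  refine ⟨norm_le_sqrt _ h, ?_⟩
  rw [← norm_neg]
  have : -(y - zc D x) = zc D x - y := by abel
  rw [this]
  exact norm_le_sqrt _ h

lemma floor_mem_cube (y : EuclideanSpace ℝ (Fin D)) : y ∈ cube D (fun i => ⌊y i⌋) := by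
  intro i
  exact ⟨Int.floor_le _, Int.lt_floor_add_one _⟩

lemma absorbA (K : Set (EuclideanSpace ℝ (Fin D))) (hc : Convex ℝ K) (x0 : EuclideanSpace ℝ (Fin D))
    (r s : ℝ) (hs : 0 < s) (hsr : 2*s ≤ r) (hball : ball x0 r ⊆ K)
    (z : EuclideanSpace ℝ (Fin D)) (hz : z ∈ K) (w : EuclideanSpace ℝ (Fin D)) (hw : ‖w‖ ≤ s) :
    x0 + (1 - 2*s/r) • (z - x0) + w ∈ K := by
  have hr : 0 < r := lt_of_lt_of_le (by linarith) hsr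
  set ε : ℝ := 2*s/r with hε
  have hε0 : 0 < ε := by positivity
  have hε1 : ε ≤ 1 := by rw [hε, div_le_one hr]; linarith
  have hu : x0 + ε⁻¹ • w ∈ ball x0 r := by
    rw [mem_ball, dist_eq_norm]
    have : x0 + ε⁻¹ • w - x0 = ε⁻¹ • w := by abel
    rw [this, norm_smul, Real.norm_eq_abs, abs_of_pos (inv_pos.mpr hε0)]
    calc ε⁻¹ * ‖w‖ ≤ ε⁻¹ * s := by
          apply mul_le_mul_of_nonneg_left hw (le_of_lt (inv_pos.mpr hε0))
      _ = r / 2 := by rw [hε]; field_simp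
      _ < r := by linarith
  have hcomb := hc hz (hball hu) (by linarith : (0:ℝ) ≤ 1 - ε) (le_of_lt hε0) (by ring)
  have : (1 - ε) • z + ε • (x0 + ε⁻¹ • w) = x0 + (1 - ε) • (z - x0) + w := by
    have h1 : ε • (ε⁻¹ • w) = w := smul_inv_smul₀ (ne_of_gt hε0) w
    rw [smul_add, h1]
    module
  rwa [this] at hcomb

lemma absorbB (K : Set (EuclideanSpace ℝ (Fin D))) (hc : Convex ℝ K) (x0 : EuclideanSpace ℝ (Fin D))
    (r s : ℝ) (hs : 0 < s) (hsr : 2*s ≤ r) (hball : ball x0 r ⊆ K)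
    (p : EuclideanSpace ℝ (Fin D)) (hp : p ∈ K) (w : EuclideanSpace ℝ (Fin D)) (hw : ‖w‖ ≤ s) :
    p + w ∈ AffineMap.homothety x0 (1 + 2*s/r) '' K := by
  have hr : 0 < r := lt_of_lt_of_le (by linarith) hsr
  set ε : ℝ := 2*s/r with hε
  have hε0 : 0 < ε := by positivity
  set a : ℝ := 1 + ε with ha
  have ha0 : 0 < a := by positivity
  have hu : x0 + ε⁻¹ • w ∈ ball x0 r := by
    rw [mem_ball, dist_eq_norm]
    have : x0 + ε⁻¹ • w - x0 = ε⁻¹ • w := by abel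
    rw [this, norm_smul, Real.norm_eq_abs, abs_of_pos (inv_pos.mpr hε0)]
    calc ε⁻¹ * ‖w‖ ≤ ε⁻¹ * s := by
          apply mul_le_mul_of_nonneg_left hw (le_of_lt (inv_pos.mpr hε0))
      _ = r / 2 := by rw [hε]; field_simp
      _ < r := by linarith
  have hz : a⁻¹ • p + (ε * a⁻¹) • (x0 + ε⁻¹ • w) ∈ K := by
    apply hc hp (hball hu) (by positivity) (by positivity)
    field_simp; exact ha.symm
  refine ⟨_, hz, ?_⟩
  rw [AffineMap.homothety_apply]
  simp only [vsub_eq_sub, vadd_eq_add]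
  have h1 : (ε * a⁻¹) • (x0 + ε⁻¹ • w) = (ε * a⁻¹) • x0 + a⁻¹ • w := by
    rw [smul_add, smul_smul]
    congr 2
    field_simp
  rw [h1]
  match_scalars <;> field_simp <;> rw [ha] <;> ring

lemma count_bounds (hD : 0 < D) (K : Set (EuclideanSpace ℝ (Fin D)))
    (hKb : Bornology.IsBounded K) (hKc : Convex ℝ K)
    (x0 : EuclideanSpace ℝ (Fin D)) (r : ℝ) (hr : 4 * Real.sqrt D ≤ r) (hball : ball x0 r ⊆ K) :
    (1 - 2*Real.sqrt D/r)^D * (volume K).toReal ≤ ({x : Fin D → ℤ | zc D x ∈ K}.ncard : ℝ)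
    ∧ ({x : Fin D → ℤ | zc D x ∈ K}.ncard : ℝ) ≤ (1 + 2*Real.sqrt D/r)^D * (volume K).toReal := by
  set s : ℝ := Real.sqrt D with hsdef
  have hs : 0 < s := Real.sqrt_pos.mpr (by exact_mod_cast hD)
  have hr0 : 0 < r := lt_of_lt_of_le (by linarith) hr
  have hsr : 2*s ≤ r := by linarith
  have hθ0 : (0:ℝ) ≤ 1 - 2*s/r := by
    have : 2*s/r ≤ 1 := by rw [div_le_one hr0]; linarith
    linarith
  have hθ'0 : (0:ℝ) ≤ 1 + 2*s/r := by positivity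
  have hA : {x : Fin D → ℤ | zc D x ∈ K}.Finite := lat_finite K hKb
  set A : Finset (Fin D → ℤ) := hA.toFinset with hAdef
  have hmemA : ∀ x, x ∈ A ↔ zc D x ∈ K := by
    intro x; rw [hAdef, Set.Finite.mem_toFinset]; rfl
  -- volume of K is finite
  obtain ⟨R, hR⟩ := hKb.subset_closedBall 0
  have hKfin : volume K ≠ ⊤ :=
    ne_top_of_le_ne_top (measure_closedBall_lt_top).ne (measure_mono hR)
  have hcard : ({x : Fin D → ℤ | zc D x ∈ K}.ncard : ℝ) = (A.card : ℝ) := by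
    rw [Set.ncard_eq_toFinset_card _ hA, hAdef]
  have hfinrank : Module.finrank ℝ (EuclideanSpace ℝ (Fin D)) = D := finrank_euclideanSpace_fin
  constructor
  · -- lower bound
    have hsub : AffineMap.homothety x0 (1 - 2*s/r) '' K ⊆ ⋃ x ∈ A, cube D x := by
      rintro y ⟨z, hz, rfl⟩
      set xf : Fin D → ℤ := fun i => ⌊(AffineMap.homothety x0 (1 - 2*s/r) z) i⌋ with hxf
      have hyc : (AffineMap.homothety x0 (1 - 2*s/r) z) ∈ cube D xf := floor_mem_cube _
      have hw := (mem_cube_norm_le hyc).1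
      have hmem : zc D xf ∈ K := by
        have h2 := absorbA K hKc x0 r s hs hsr hball z hz _ hw
        have heq : x0 + (1 - 2*s/r) • (z - x0) + (zc D xf - AffineMap.homothety x0 (1 - 2*s/r) z)
            = zc D xf := by
          rw [AffineMap.homothety_apply]
          simp only [vsub_eq_sub, vadd_eq_add]
          abel
        rwa [heq] at h2
      exact Set.mem_biUnion ((hmemA xf).mpr hmem) hyc
    calc (1 - 2*s/r)^D * (volume K).toReal
        = (volume (AffineMap.homothety x0 (1 - 2*s/r) '' K)).toReal := by
          rw [Measure.addHaar_image_homothety, hfinrank, ENNReal.toReal_mul,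
            ENNReal.toReal_ofReal (by positivity), abs_of_nonneg (by positivity)]
      _ ≤ ((∑ x ∈ A, volume (cube D x)).toReal) := by
          apply ENNReal.toReal_mono
          · simp [cube_vol]
          · exact le_trans (measure_mono hsub) (measure_biUnion_finset_le A _)
      _ = (A.card : ℝ) := by simp [cube_vol]
      _ = _ := hcard.symm
  · -- upper bound
    have hsub : ∀ x ∈ A, cube D x ⊆ AffineMap.homothety x0 (1 + 2*s/r) '' K := by
      intro x hx y hy
      have hw := (mem_cube_norm_le hy).2
      have h2 := absorbB K hKc x0 r s hs hsr hball (zc D x) ((hmemA x).mp hx) _ hw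
      have heq : zc D x + (y - zc D x) = y := by abel
      rwa [heq] at h2
    have hdisj : (A : Set (Fin D → ℤ)).Pairwise (Function.onFun Disjoint (cube D)) := by
      intro x _ x' _ hne
      exact cube_disjoint hne
    calc ({x : Fin D → ℤ | zc D x ∈ K}.ncard : ℝ) = (A.card : ℝ) := hcard
      _ = (∑ x ∈ A, volume (cube D x)).toReal := by simp [cube_vol]
      _ = (volume (⋃ x ∈ A, cube D x)).toReal := by
          rw [measure_biUnion_finset hdisj (fun x _ => cube_meas x)]
      _ ≤ (volume (AffineMap.homothety x0 (1 + 2*s/r) '' K)).toReal := by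
          apply ENNReal.toReal_mono
          · rw [Measure.addHaar_image_homothety]
            exact ENNReal.mul_ne_top ENNReal.ofReal_ne_top hKfin
          · exact measure_mono (Set.iUnion₂_subset hsub)
      _ = (1 + 2*s/r)^D * (volume K).toReal := by
          rw [Measure.addHaar_image_homothety, hfinrank, ENNReal.toReal_mul,
            ENNReal.toReal_ofReal (by positivity), abs_of_nonneg (by positivity)]

def res (D m : ℕ) (hm : 0 < m) (x : Fin D → ℤ) : Fin D → Fin m := fun i =>
  ⟨(x i % m).toNat, by
    rw [← Nat.cast_lt (α := ℤ), Int.toNat_of_nonneg (Int.emod_nonneg _ (by exact_mod_cast hm.ne'))]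
    exact Int.emod_lt_of_pos _ (by exact_mod_cast hm)⟩

lemma res_coe (m : ℕ) (hm : 0 < m) (x : Fin D → ℤ) (i : Fin D) :
    ((res D m hm x i : ℕ) : ℤ) = x i % m := by
  simp [res, Int.toNat_of_nonneg (Int.emod_nonneg _ (by exact_mod_cast hm.ne' : (m:ℤ) ≠ 0))]

lemma res_decomp (m : ℕ) (hm : 0 < m) (x : Fin D → ℤ) (i : Fin D) :
    x i = (res D m hm x i : ℤ) + m * (x i / m) := by
  rw [res_coe]
  exact (Int.emod_add_mul_ediv (x i) m).symm

-- smul/add coords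
example (y c : EuclideanSpace ℝ (Fin D)) (t : ℝ) (i : Fin D) : (t • y + c) i = t * y i + c i := rfl

lemma pow_one_add_le (x : ℝ) (hx0 : 0 ≤ x) (hx1 : x ≤ 1) (n : ℕ) :
    (1+x)^n ≤ 1 + (2^n - 1)*x := by
  induction n with
  | zero => simp
  | succ k ih =>
    have h2 : (0:ℝ) ≤ 2^k - 1 := by
      have : (1:ℝ) ≤ 2^k := one_le_pow₀ (by norm_num)
      linarith
    calc (1+x)^(k+1) = (1+x)^k * (1+x) := by ring
      _ ≤ (1 + (2^k-1)*x) * (1+x) := by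
          apply mul_le_mul_of_nonneg_right ih (by linarith)
      _ = 1 + (2^(k+1) - 1)*x + ((2^k-1)*x)*(x-1) + x*x - x*x := by ring
      _ ≤ 1 + (2^(k+1) - 1)*x := by nlinarith [mul_nonneg (mul_nonneg h2 hx0) (sub_nonneg.mpr hx1), mul_nonneg hx0 hx0]

lemma sqrtD_le : Real.sqrt D ≤ D + 1 := by
  rw [show ((D:ℝ)+1) = Real.sqrt (((D:ℝ)+1)^2) by rw [Real.sqrt_sq (by positivity)]]
  apply Real.sqrt_le_sqrt
  nlinarith [Nat.cast_nonneg (α := ℝ) D]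

lemma avg_est {ι : Type*} [Fintype ι] [Nonempty ι] (g N : ι → ℝ) (hg : ∀ i, 0 ≤ g i)
    (L U δ : ℝ) (hL : 0 < L) (hlo : ∀ i, L ≤ N i) (hhi : ∀ i, N i ≤ U)
    (hUL : U ≤ (1+δ) * L) (hδ : 0 ≤ δ) :
    |(∑ i, g i * N i) / (∑ i, N i) - (∑ i, g i) / (Fintype.card ι)|
      ≤ δ * ((∑ i, g i) / (Fintype.card ι)) := by
  set n : ℝ := (Fintype.card ι : ℝ) with hn
  have hn0 : 0 < n := by
    rw [hn]; exact_mod_cast Fintype.card_pos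
  set F : ℝ := ∑ i, g i with hF
  set S : ℝ := ∑ i, g i * N i with hS
  set Nt : ℝ := ∑ i, N i with hNt
  have hF0 : 0 ≤ F := Finset.sum_nonneg fun i _ => hg i
  have hU0 : 0 < U := lt_of_lt_of_le hL (le_trans (hlo (Classical.arbitrary ι)) (hhi _))
  have hNlo : n * L ≤ Nt := by
    rw [hNt, hn]
    calc (Fintype.card ι : ℝ) * L = ∑ _i : ι, L := by rw [Finset.sum_const]; simp [mul_comm]
      _ ≤ ∑ i, N i := Finset.sum_le_sum fun i _ => hlo i
  have hNhi : Nt ≤ n * U := by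
    rw [hNt, hn]
    calc ∑ i, N i ≤ ∑ _i : ι, U := Finset.sum_le_sum fun i _ => hhi i
      _ = (Fintype.card ι : ℝ) * U := by rw [Finset.sum_const]; simp [mul_comm]
  have hN0 : 0 < Nt := lt_of_lt_of_le (by positivity) hNlo
  have hShi : S ≤ U * F := by
    rw [hS, hF, Finset.mul_sum]
    exact Finset.sum_le_sum fun i _ => by
      rw [mul_comm (U) (g i)]
      exact mul_le_mul_of_nonneg_left (hhi i) (hg i)
  have hSlo : L * F ≤ S := by
    rw [hS, hF, Finset.mul_sum]
    exact Finset.sum_le_sum fun i _ => by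
      rw [mul_comm (L) (g i)]
      exact mul_le_mul_of_nonneg_left (hlo i) (hg i)
  have hS0 : 0 ≤ S := le_trans (by positivity) hSlo
  rw [abs_le]
  constructor
  · -- F/n - S/Nt ≤ δ F/n  i.e.  (1-δ) F/n ≤ S/Nt
    rw [neg_le, neg_sub]
    have h1 : L * F / (n * U) ≤ S / Nt :=
      div_le_div₀ hS0 hSlo hN0 hNhi
    have h2 : F / n - δ * (F / n) ≤ L * F / (n * U) := by
      have key : (1 - δ) * U ≤ L := by nlinarith
      have e1 : F / n - δ * (F / n) = ((1-δ)*F)/n := by field_simp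
      rw [e1, div_le_div_iff₀ hn0 (by positivity)]
      nlinarith [mul_le_mul_of_nonneg_right key hF0, mul_nonneg hF0 hn0.le]
    linarith
  · -- S/Nt - F/n ≤ δ F/n
    have h1 : S / Nt ≤ U * F / (n * L) :=
      div_le_div₀ (by positivity) hShi (by positivity) hNlo
    have h2 : U * F / (n * L) ≤ F / n + δ * (F / n) := by
      have e1 : F / n + δ * (F / n) = ((1+δ)*F)/n := by field_simp
      rw [e1, div_le_div_iff₀ (by positivity) hn0]
      nlinarith [mul_le_mul_of_nonneg_right hUL hF0, mul_nonneg hF0 hn0.le]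
    linarith [le_trans h1 h2]

lemma Kset_bounded (m : ℕ) (hm : 0 < m) (Ω : Set (EuclideanSpace ℝ (Fin D)))
    (hΩb : Bornology.IsBounded Ω) (c : EuclideanSpace ℝ (Fin D)) :
    Bornology.IsBounded {y : EuclideanSpace ℝ (Fin D) | (m:ℝ) • y + c ∈ Ω} := by
  obtain ⟨R, hR⟩ := hΩb.subset_closedBall 0
  have hm0 : (0:ℝ) < m := by exact_mod_cast hm
  apply (isBounded_closedBall (x := (0 : EuclideanSpace ℝ (Fin D))) (r := (R + ‖c‖)/m)).subset
  intro y hy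
  have h1 : ‖(m:ℝ) • y + c‖ ≤ R := by simpa using mem_closedBall_zero_iff.mp (hR hy)
  have h2 : ‖(m:ℝ) • y‖ ≤ R + ‖c‖ := by
    calc ‖(m:ℝ) • y‖ = ‖(m:ℝ) • y + c - c‖ := by rw [add_sub_cancel_right]
      _ ≤ ‖(m:ℝ) • y + c‖ + ‖c‖ := norm_sub_le _ _
      _ ≤ R + ‖c‖ := by linarith
  rw [mem_closedBall_zero_iff]
  rw [norm_smul, Real.norm_eq_abs, abs_of_pos hm0] at h2
  rw [le_div_iff₀ hm0]
  linarith [mul_comm ‖y‖ ((m:ℝ))]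

lemma Kset_convex (m : ℕ) (Ω : Set (EuclideanSpace ℝ (Fin D))) (hΩc : Convex ℝ Ω)
    (c : EuclideanSpace ℝ (Fin D)) :
    Convex ℝ {y : EuclideanSpace ℝ (Fin D) | (m:ℝ) • y + c ∈ Ω} := by
  intro y1 h1 y2 h2 t1 t2 ht1 ht2 hsum
  show (m:ℝ) • (t1 • y1 + t2 • y2) + c ∈ Ω
  have heq : (m:ℝ) • (t1 • y1 + t2 • y2) + c
      = t1 • ((m:ℝ) • y1 + c) + t2 • ((m:ℝ) • y2 + c) := by
    match_scalars <;> first | ring1 | linarith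
  rw [heq]
  exact hΩc h1 h2 ht1 ht2 hsum

lemma Kset_ball (m : ℕ) (hm : 0 < m) (Ω : Set (EuclideanSpace ℝ (Fin D)))
    (x0 : EuclideanSpace ℝ (Fin D)) (ρ : ℝ) (hball : ball x0 ρ ⊆ Ω)
    (c : EuclideanSpace ℝ (Fin D)) :
    ball ((m:ℝ)⁻¹ • (x0 - c)) (ρ/m) ⊆ {y : EuclideanSpace ℝ (Fin D) | (m:ℝ) • y + c ∈ Ω} := by
  have hm0 : (0:ℝ) < m := by exact_mod_cast hm
  intro y hy
  apply hball
  rw [mem_ball, dist_eq_norm] at hy ⊢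
  have heq : (m:ℝ) • y + c - x0 = (m:ℝ) • (y - (m:ℝ)⁻¹ • (x0 - c)) := by
    rw [smul_sub, smul_inv_smul₀ (ne_of_gt hm0)]
    abel
  rw [heq, norm_smul, Real.norm_eq_abs, abs_of_pos hm0]
  calc (m:ℝ) * ‖y - (m:ℝ)⁻¹ • (x0 - c)‖ < m * (ρ/m) := by
        exact mul_lt_mul_of_pos_left hy hm0
    _ = ρ := by field_simp

lemma Kset_vol (m : ℕ) (hm : 0 < m) (Ω : Set (EuclideanSpace ℝ (Fin D)))
    (c : EuclideanSpace ℝ (Fin D)) :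
    volume {y : EuclideanSpace ℝ (Fin D) | (m:ℝ) • y + c ∈ Ω}
      = volume ((m:ℝ)⁻¹ • Ω) := by
  have hm0 : (0:ℝ) < m := by exact_mod_cast hm
  have hset : {y : EuclideanSpace ℝ (Fin D) | (m:ℝ) • y + c ∈ Ω}
      = (-((m:ℝ)⁻¹ • c)) +ᵥ ((m:ℝ)⁻¹ • Ω) := by
    ext y
    rw [Set.mem_vadd_set_iff_neg_vadd_mem, neg_neg]
    rw [Set.mem_smul_set_iff_inv_smul_mem₀ (inv_ne_zero (ne_of_gt hm0)), inv_inv]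
    simp only [Set.mem_setOf_eq, vadd_eq_add]
    constructor <;> intro h <;> [skip; skip]
    · have : (m:ℝ) • ((m:ℝ)⁻¹ • c + y) = (m:ℝ) • y + c := by
        rw [smul_add, smul_inv_smul₀ (ne_of_gt hm0)]; abel
      rwa [this]
    · have : (m:ℝ) • ((m:ℝ)⁻¹ • c + y) = (m:ℝ) • y + c := by
        rw [smul_add, smul_inv_smul₀ (ne_of_gt hm0)]; abel
      rwa [this] at h
  rw [hset, measure_vadd]

lemma zc_shift (m : ℕ) (a : Fin D → Fin m) (k : Fin D → ℤ) :
    (m:ℝ) • zc D k + zc D (fun i => (a i : ℤ)) = zc D (fun i => (a i : ℤ) + m * k i) := by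
  ext i
  simp [zc]
  ring

lemma fiber_card' {m : ℕ} (hm : 0 < m) [DecidableEq (Fin D → Fin m)]
    (Ω : Set (EuclideanSpace ℝ (Fin D)))
    (hA : {x : Fin D → ℤ | zc D x ∈ Ω}.Finite) (a : Fin D → Fin m)
    (hT : {k : Fin D → ℤ | (m:ℝ) • zc D k + zc D (fun i => (a i : ℤ)) ∈ Ω}.Finite) :
    (hA.toFinset.filter (fun x => res D m hm x = a)).card
      = {k : Fin D → ℤ | (m:ℝ) • zc D k + zc D (fun i => (a i : ℤ)) ∈ Ω}.ncard := by
  classical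
  rw [Set.ncard_eq_toFinset_card _ hT]
  have hmZ : ((m:ℤ)) ≠ 0 := by exact_mod_cast hm.ne'
  apply Finset.card_nbij' (i := fun (x : Fin D → ℤ) => fun j => x j / m)
    (j := fun (k : Fin D → ℤ) => fun j => (a j : ℤ) + m * k j)
  · -- maps into
    intro x hx
    rw [Finset.mem_coe, Finset.mem_filter, Set.Finite.mem_toFinset] at hx
    obtain ⟨hxA, hres⟩ := hx
    rw [Finset.mem_coe, Set.Finite.mem_toFinset]
    show (m:ℝ) • zc D (fun j => x j / m) + zc D (fun i => (a i:ℤ)) ∈ Ω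
    rw [zc_shift]
    have : (fun i => ((a i:ℤ) + m * (x i / m))) = x := by
      funext i
      rw [← hres]
      exact (res_decomp m hm x i).symm
    rw [this]
    exact hxA
  · -- reverse maps into
    intro k hk
    rw [Finset.mem_coe, Set.Finite.mem_toFinset] at hk
    rw [Finset.mem_coe, Finset.mem_filter, Set.Finite.mem_toFinset]
    constructor
    · show zc D (fun j => (a j:ℤ) + m * k j) ∈ Ω
      rw [← zc_shift]
      exact hk
    · funext i
      apply Fin.ext
      have h1 : ((a i:ℤ) + m * k i) % m = (a i:ℤ) := by
        rw [Int.add_mul_emod_self_left]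
        exact Int.emod_eq_of_lt (by positivity) (by exact_mod_cast (a i).isLt)
      show (((a i:ℤ) + m * k i) % m).toNat = (a i : ℕ)
      rw [h1]
      simp
  · -- left inverse
    intro x hx
    rw [Finset.mem_coe, Finset.mem_filter, Set.Finite.mem_toFinset] at hx
    funext i
    rw [← hx.2]
    exact (res_decomp m hm x i).symm
  · -- right inverse
    intro k _
    funext i
    show ((a i:ℤ) + m * k i) / m = k i
    rw [Int.add_mul_ediv_left _ _ hmZ, Int.ediv_eq_zero_of_lt (by positivity)
      (by exact_mod_cast (a i).isLt)]
    ring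

set_option maxHeartbeats 1000000 in
/-- Averaging lemma: if `f : ℤ^D → ℝ≥0` is periodic of period `m` in each coordinate
and `Ω ⊂ ℝ^D` is a convex body containing a ball of radius `ρ ≥ C_D · m`, then the
average of `f` over the lattice points `Ω ∩ ℤ^D` equals the mean of `f` over a single
period `(ℤ/mℤ)^D` (computed as the average over `{0,…,m-1}^D`) up to a multiplicative
factor `1 + O_D(m/ρ)`. -/
theorem stmt_11 (D : ℕ) :
    ∃ C : ℝ, 0 < C ∧
      ∀ (m : ℕ) (f : (Fin D → ℤ) → ℝ) (Ω : Set (EuclideanSpace ℝ (Fin D))) (ρ : ℝ),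
        1 ≤ m → (∀ x, 0 ≤ f x) →
        (∀ (x k : Fin D → ℤ), f (fun i => x i + m * k i) = f x) →
        IsOpen Ω → Bornology.IsBounded Ω → Convex ℝ Ω →
        (∃ x, ball x ρ ⊆ Ω) → C * m ≤ ρ →
        (({x : Fin D → ℤ | WithLp.toLp 2 (fun i => (x i : ℝ)) ∈ Ω}).Finite ∧
          ({x : Fin D → ℤ | WithLp.toLp 2 (fun i => (x i : ℝ)) ∈ Ω}).Nonempty ∧
          |(∑ᶠ x ∈ {x : Fin D → ℤ | WithLp.toLp 2 (fun i => (x i : ℝ)) ∈ Ω}, f x)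
              / ({x : Fin D → ℤ | WithLp.toLp 2 (fun i => (x i : ℝ)) ∈ Ω}).ncard
            - (1 / (m : ℝ) ^ D) * ∑ y : Fin D → Fin m, f (fun i => (y i : ℤ))|
          ≤ C * ((m : ℝ) / ρ) *
            ((1 / (m : ℝ) ^ D) * ∑ y : Fin D → Fin m, f (fun i => (y i : ℤ)))) := by
  classical
  refine ⟨8 * 2^D * ((D:ℝ)+1), by positivity, ?_⟩
  intro m f Ω ρ hm hf0 hper hΩo hΩb hΩc hballex hCρ
  obtain ⟨x0, hball⟩ := hballex
  have h2D : (1:ℝ) ≤ 2^D := one_le_pow₀ (by norm_num)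
  have hDc0 : (0:ℝ) ≤ (D:ℝ) := Nat.cast_nonneg D
  have hCc1 : (8:ℝ) ≤ 8 * 2^D * ((D:ℝ)+1) := by nlinarith
  have hm' : 0 < m := hm
  have hm0 : (0:ℝ) < m := by exact_mod_cast hm
  have hρ0 : (0:ℝ) < ρ := lt_of_lt_of_le (by nlinarith) hCρ
  have hmρ0 : (0:ℝ) ≤ (m:ℝ)/ρ := by positivity
  rcases Nat.eq_zero_or_pos D with hD0 | hD
  · subst hD0
    have hx : ∀ z : EuclideanSpace ℝ (Fin 0), z ∈ Ω := by
      intro z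
      apply hball
      rw [mem_ball]
      have hz : dist z x0 = 0 := by
        rw [EuclideanSpace.dist_eq]
        simp
      rw [hz]; exact hρ0
    have hAu : {x : Fin 0 → ℤ | WithLp.toLp 2 (fun i => (x i:ℝ)) ∈ Ω} = Set.univ :=
      Set.eq_univ_of_forall (fun x => hx _)
    refine ⟨hAu ▸ Set.finite_univ, hAu ▸ Set.univ_nonempty, ?_⟩
    rw [hAu]
    have h1 : (Set.univ : Set (Fin 0 → ℤ)).ncard = 1 := by
      rw [Set.ncard_univ]; exact Nat.card_unique
    have h2 : ∑ᶠ x ∈ (Set.univ : Set (Fin 0 → ℤ)), f x = f default := by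
      rw [finsum_mem_univ, finsum_unique f]
      exact congrArg f (Subsingleton.elim _ _)
    have h3 : ∑ y : Fin 0 → Fin m, f (fun i => (y i:ℤ)) = f default := by
      rw [Finset.univ_unique, Finset.sum_singleton]
      exact congrArg f (Subsingleton.elim _ _)
    rw [h1, h2, h3]
    have hrhs : 0 ≤ 8 * 2^(0:ℕ) * ((0:ℕ):ℝ)+1 := by norm_num
    have : f default / (1:ℕ) - 1 / (m:ℝ)^(0:ℕ) * f default = 0 := by
      norm_num
    rw [this, abs_zero]
    apply mul_nonneg (mul_nonneg (by positivity) hmρ0)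
    apply mul_nonneg (by positivity) (hf0 _)
  · -- D ≥ 1
    have hsD : Real.sqrt D ≤ (D:ℝ) + 1 := sqrtD_le
    have hsD0 : 0 < Real.sqrt D := Real.sqrt_pos.mpr (by exact_mod_cast hD)
    set r : ℝ := ρ / m with hrdef
    have hr0 : 0 < r := by positivity
    have hCr : 8 * 2^D * ((D:ℝ)+1) ≤ r := by
      rw [hrdef, le_div_iff₀ hm0]; exact hCρ
    have h4r : 4 * Real.sqrt D ≤ r := le_trans (by nlinarith) hCr
    set ε : ℝ := 2 * Real.sqrt D / r with hεdef
    have hε0 : 0 < ε := by positivity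
    have hmρle : (m:ℝ)/ρ ≤ 1/(8 * 2^D * ((D:ℝ)+1)) := by
      rw [div_le_div_iff₀ hρ0 (by positivity)]
      nlinarith [hCρ]
    have hεle : ε ≤ 2*((D:ℝ)+1) * ((m:ℝ)/ρ) := by
      rw [hεdef, hrdef, div_div_eq_mul_div, mul_div_assoc]
      exact mul_le_mul_of_nonneg_right (by nlinarith) hmρ0
    have hε14 : ε ≤ 1/4 := by
      have h1 : 2*((D:ℝ)+1) * ((m:ℝ)/ρ) ≤ 2*((D:ℝ)+1) * (1/(8*2^D*((D:ℝ)+1))) :=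
        mul_le_mul_of_nonneg_left hmρle (by positivity)
      have h2 : 2*((D:ℝ)+1) * (1/(8*2^D*((D:ℝ)+1))) ≤ 1/4 := by
        rw [mul_one_div, div_le_div_iff₀ (by positivity) (by norm_num)]
        nlinarith
      linarith
    have h1ε : (0:ℝ) < 1 - ε := by linarith
    set V : ℝ := (volume ((m:ℝ)⁻¹ • Ω)).toReal with hVdef
    set Ts : (Fin D → Fin m) → Set (Fin D → ℤ) :=
      fun a => {k | (m:ℝ) • zc D k + zc D (fun i => ((a i : ℤ))) ∈ Ω} with hTs
    have hTfin : ∀ a, (Ts a).Finite := by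
      intro a
      exact lat_finite {y | (m:ℝ) • y + zc D (fun i => ((a i : ℤ))) ∈ Ω}
        (Kset_bounded m hm' Ω hΩb _)
    have hcount : ∀ a : Fin D → Fin m,
        (1-ε)^D * V ≤ ((Ts a).ncard : ℝ) ∧ ((Ts a).ncard : ℝ) ≤ (1+ε)^D * V := by
      intro a
      have hb := count_bounds hD {y | (m:ℝ) • y + zc D (fun i => ((a i : ℤ))) ∈ Ω}
        (Kset_bounded m hm' Ω hΩb _) (Kset_convex m Ω hΩc _)
        ((m:ℝ)⁻¹ • (x0 - zc D (fun i => ((a i : ℤ))))) r h4r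
        (by rw [hrdef]; exact Kset_ball m hm' Ω x0 ρ hball _)
      rw [Kset_vol m hm' Ω _, ← hεdef, ← hVdef] at hb
      exact hb
    have hV0 : 0 < V := by
      have hm'' : (0:ℕ) < m := hm'
      set a0 : Fin D → Fin m := fun _ => ⟨0, hm''⟩ with ha0
      set c0 := zc D (fun i => ((a0 i : ℤ))) with hc0
      have hbp := measure_ball_pos volume ((m:ℝ)⁻¹ • (x0 - c0)) hr0
      have hsub : ball ((m:ℝ)⁻¹ • (x0 - c0)) r ⊆ {y | (m:ℝ) • y + c0 ∈ Ω} := by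
        rw [hrdef]; exact Kset_ball m hm' Ω x0 ρ hball _
      obtain ⟨R, hR⟩ := (Kset_bounded m hm' Ω hΩb c0).subset_closedBall 0
      have hne : volume {y : EuclideanSpace ℝ (Fin D) | (m:ℝ) • y + c0 ∈ Ω} ≠ ⊤ :=
        ne_top_of_le_ne_top measure_closedBall_lt_top.ne (measure_mono hR)
      rw [hVdef, ← Kset_vol m hm' Ω c0]
      exact ENNReal.toReal_pos (ne_of_gt (lt_of_lt_of_le hbp (measure_mono hsub))) hne
    have hL0 : 0 < (1-ε)^D * V := mul_pos (pow_pos h1ε D) hV0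
    have hAfin : {x : Fin D → ℤ | zc D x ∈ Ω}.Finite := lat_finite Ω hΩb
    have hsetA : {x : Fin D → ℤ | WithLp.toLp 2 (fun i => (x i : ℝ)) ∈ Ω}
        = {x : Fin D → ℤ | zc D x ∈ Ω} := rfl
    set Af := hAfin.toFinset with hAf
    have hfib : ∀ a, (Af.filter fun x => res D m hm' x = a).card = (Ts a).ncard :=
      fun a => fiber_card' hm' Ω hAfin a (hTfin a)
    have hS : ∑ x ∈ Af, f x
        = ∑ a : Fin D → Fin m, f (fun i => ((a i : ℤ))) * ((Ts a).ncard : ℝ) := by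
      rw [← Finset.sum_fiberwise Af (fun x => res D m hm' x) f]
      apply Finset.sum_congr rfl
      intro a _
      have hconst : ∀ x ∈ Af.filter (fun x => res D m hm' x = a),
          f x = f (fun i => ((a i : ℤ))) := by
        intro x hx
        rw [Finset.mem_filter] at hx
        have hdec : (fun i => ((res D m hm' x i : ℕ):ℤ) + m * (x i / m)) = x := by
          funext i; exact (res_decomp m hm' x i).symm
        have h2 := hper (fun i => ((res D m hm' x i : ℕ):ℤ)) (fun i => x i / m)
        beta_reduce at h2
        rw [hdec] at h2
        rw [hx.2] at h2
        exact h2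
      rw [Finset.sum_congr rfl hconst, Finset.sum_const, hfib a, nsmul_eq_mul, mul_comm]
    have hNcard : (Af.card:ℝ) = ∑ a : Fin D → Fin m, ((Ts a).ncard : ℝ) := by
      rw [Finset.card_eq_sum_card_fiberwise
        (f := fun x => res D m hm' x) (t := Finset.univ) (fun x _ => Finset.mem_univ _)]
      push_cast
      exact Finset.sum_congr rfl (fun a _ => by rw [hfib a])
    haveI : Nonempty (Fin m) := ⟨⟨0, hm'⟩⟩
    have hcardpos : 0 < (Af.card:ℝ) := by
      rw [hNcard]
      calc (0:ℝ) < (Fintype.card (Fin D → Fin m) : ℝ) * ((1-ε)^D * V) := by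
            apply mul_pos _ hL0
            exact_mod_cast Fintype.card_pos
        _ = ∑ _a : Fin D → Fin m, (1-ε)^D * V := by
            rw [Finset.sum_const, nsmul_eq_mul, Finset.card_univ]
        _ ≤ ∑ a, ((Ts a).ncard:ℝ) := Finset.sum_le_sum (fun a _ => (hcount a).1)
    have hAne : {x : Fin D → ℤ | WithLp.toLp 2 (fun i => (x i:ℝ)) ∈ Ω}.Nonempty := by
      rw [hsetA]
      obtain ⟨x, hx⟩ : Af.Nonempty := Finset.card_pos.mp (by exact_mod_cast hcardpos)
      exact ⟨x, (Set.Finite.mem_toFinset hAfin).mp hx⟩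
    refine ⟨hsetA ▸ hAfin, hAne, ?_⟩
    have hcardι : ((Fintype.card (Fin D → Fin m)) : ℝ) = (m:ℝ)^D := by
      rw [Fintype.card_pi]
      simp
    have hUL : (1+ε)^D * V
        ≤ (1 + 8 * 2^D * ((D:ℝ)+1) * ((m:ℝ)/ρ)) * ((1-ε)^D * V) := by
      have h4ε1 : 4*ε ≤ 1 := by linarith
      have step1 : (1+ε) ≤ (1+4*ε)*(1-ε) := by nlinarith
      have step2 : (1+ε)^D ≤ ((1+4*ε)*(1-ε))^D := pow_le_pow_left₀ (by positivity) step1 D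
      have step3 : (1+4*ε)^D ≤ 1 + (2^D - 1)*(4*ε) :=
        pow_one_add_le _ (by positivity) h4ε1 D
      have step4 : 1 + ((2:ℝ)^D - 1)*(4*ε) ≤ 1 + 8 * 2^D * ((D:ℝ)+1) * ((m:ℝ)/ρ) := by
        have hPQ : (0:ℝ) ≤ ((D:ℝ)+1) * ((m:ℝ)/ρ) := by positivity
        have e1 : ((2:ℝ)^D - 1) * (4*ε) ≤ ((2:ℝ)^D - 1) * (4 * (2*((D:ℝ)+1) * ((m:ℝ)/ρ))) :=
          mul_le_mul_of_nonneg_left (by linarith) (by linarith)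
        have e2 : ((2:ℝ)^D - 1) * (4 * (2*((D:ℝ)+1) * ((m:ℝ)/ρ))) ≤ 8 * 2^D * ((D:ℝ)+1) * ((m:ℝ)/ρ) := by
          nlinarith [hPQ]
        linarith
      calc (1+ε)^D * V ≤ ((1+4*ε)*(1-ε))^D * V :=
            mul_le_mul_of_nonneg_right step2 hV0.le
        _ = (1+4*ε)^D * ((1-ε)^D * V) := by rw [mul_pow, mul_assoc]
        _ ≤ (1 + 8 * 2^D * ((D:ℝ)+1) * ((m:ℝ)/ρ)) * ((1-ε)^D * V) := by
            apply mul_le_mul_of_nonneg_right (le_trans step3 step4)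
            positivity
    have key := avg_est (g := fun a : Fin D → Fin m => f (fun i => ((a i : ℤ))))
      (N := fun a => ((Ts a).ncard : ℝ)) (fun a => hf0 _)
      ((1-ε)^D * V) ((1+ε)^D * V) (8 * 2^D * ((D:ℝ)+1) * ((m:ℝ)/ρ)) hL0
      (fun a => (hcount a).1) (fun a => (hcount a).2) hUL (by positivity)
    rw [hcardι] at key
    have hfs : ∑ᶠ x ∈ {x : Fin D → ℤ | zc D x ∈ Ω}, f x = ∑ x ∈ Af, f x := by
      rw [← Set.Finite.coe_toFinset hAfin, finsum_mem_coe_finset]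
    have hnc : (({x : Fin D → ℤ | zc D x ∈ Ω}).ncard : ℝ) = (Af.card : ℝ) := by
      rw [Set.ncard_eq_toFinset_card _ hAfin]
    rw [hsetA, hfs, hnc, hS, hNcard]
    have he : 1 / ((m:ℝ))^D * (∑ y : Fin D → Fin m, f fun i => ((y i : ℤ)))
        = (∑ y : Fin D → Fin m, f fun i => ((y i : ℤ))) / ((m:ℝ))^D := one_div_mul_eq_div _ _
    rw [he]
    exact key
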